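/- Let p_{0,1}(x) = 1/(π(1+x²)) and p_{1,1}(x) = 1/(π(1+(x−1)²)), and for θ ∈ (0,1) let m_θ = (1−θ)·p_{0,1} + θ·p_{1,1} and F(θ) = ∫_ℝ m_θ(x)·log m_θ(x) dx. Then for every θ ∈ (0,1), F is differentiable at θ with derivative F'(θ) = log( (2·√(1+θ−θ²)+θ+2) / (2·√(1+θ−θ²)−θ+3) ). -/

import Mathlib

open MeasureTheory Real Filter Topology Set


lemma integrable_rpow34 : Integrable (fun x : ℝ => ((1:ℝ) + x ^ 2) ^ (-(3/4 : ℝ))) := by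
  have := integrable_rpow_neg_one_add_norm_sq (E := ℝ) (μ := volume) (r := 3/2) (by norm_num)
  have h : (-(3/2 : ℝ)/2) = (-(3/4 : ℝ)) := by norm_num
  simpa [Real.norm_eq_abs, sq_abs, h] using this

lemma integrable_p_log (a b : ℝ) (hb : 0 < b) :
    Integrable (fun x : ℝ => (π * (1 + x ^ 2))⁻¹ * Real.log ((x - a) ^ 2 + b ^ 2)) := by
  have hπ := Real.pi_pos
  have hq : ∀ x : ℝ, 0 < (x - a) ^ 2 + b ^ 2 := fun x => by positivity
  have hcont : Continuous (fun x : ℝ => (π * (1 + x ^ 2))⁻¹ * Real.log ((x - a) ^ 2 + b ^ 2)) := by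
    apply Continuous.mul
    · refine Continuous.inv₀ (by continuity) fun x => by positivity
    · exact Continuous.log (by continuity) fun x => (hq x).ne'
  set K : ℝ := 2 + 2 * a ^ 2 + b ^ 2 with hK
  have hK0 : 0 < K := by positivity
  refine Integrable.mono'
      (g := fun x => |Real.log (b ^ 2)| / π * ((1:ℝ) + x ^ 2)⁻¹
        + 4 * (K / b ^ 2) ^ ((1:ℝ)/4) / π * ((1:ℝ) + x ^ 2) ^ (-(3/4 : ℝ)))
      ((integrable_inv_one_add_sq.const_mul _).add (integrable_rpow34.const_mul _))
      hcont.aestronglyMeasurable (Eventually.of_forall fun x => ?_)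
  set t : ℝ := (x - a) ^ 2 + b ^ 2 with ht
  set u : ℝ := 1 + x ^ 2 with hu
  have hu0 : (0:ℝ) < u := by positivity
  have ht0 : (0:ℝ) < t := hq x
  have hb2 : (0:ℝ) < b ^ 2 := by positivity
  have h1 : |Real.log t| ≤ |Real.log (b ^ 2)| + (Real.log t - Real.log (b ^ 2)) := by
    have hle : Real.log (b ^ 2) ≤ Real.log t := Real.log_le_log hb2 (by nlinarith)
    rcases le_or_gt 0 (Real.log t) with h | h
    · rw [abs_of_nonneg h]
      have := le_abs_self (Real.log (b ^ 2))
      linarith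
    · rw [abs_of_neg h]
      have h2 : Real.log (b ^ 2) ≤ 0 := hle.trans h.le
      rw [abs_of_nonpos h2]; linarith
  have h2 : Real.log t - Real.log (b ^ 2) = Real.log (t / b ^ 2) :=
    (Real.log_div ht0.ne' hb2.ne').symm
  have h3 : Real.log (t / b ^ 2) ≤ 4 * (t / b ^ 2) ^ ((1:ℝ)/4) := by
    have := Real.log_le_rpow_div (x := t / b ^ 2) (by positivity) (ε := (1:ℝ)/4) (by norm_num)
    calc Real.log (t / b ^ 2) ≤ (t / b ^ 2) ^ ((1:ℝ)/4) / ((1:ℝ)/4) := this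
      _ = 4 * (t / b ^ 2) ^ ((1:ℝ)/4) := by ring
  have h4 : (t / b ^ 2) ^ ((1:ℝ)/4) ≤ (K / b ^ 2) ^ ((1:ℝ)/4) * u ^ ((1:ℝ)/4) := by
    rw [← Real.mul_rpow (by positivity) hu0.le]
    apply Real.rpow_le_rpow (by positivity) _ (by norm_num)
    rw [div_mul_eq_mul_div, div_le_div_iff_of_pos_right hb2]
    nlinarith [sq_nonneg x, sq_nonneg (x + a), sq_nonneg (x - a)]
  have habs : |(π * u)⁻¹ * Real.log t| = (π * u)⁻¹ * |Real.log t| := by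
    rw [abs_mul, abs_of_nonneg (by positivity)]
  rw [Real.norm_eq_abs, habs]
  have hrw : u⁻¹ * u ^ ((1:ℝ)/4) = u ^ (-(3/4 : ℝ)) := by
    rw [← Real.rpow_neg_one u, ← Real.rpow_add hu0]
    norm_num
  have hpu : (π * u)⁻¹ = π⁻¹ * u⁻¹ := by rw [mul_inv]
  calc (π * u)⁻¹ * |Real.log t|
      ≤ (π * u)⁻¹ * (|Real.log (b ^ 2)| + 4 * ((K / b ^ 2) ^ ((1:ℝ)/4) * u ^ ((1:ℝ)/4))) := by
        apply mul_le_mul_of_nonneg_left _ (by positivity)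
        calc |Real.log t| ≤ |Real.log (b ^ 2)| + (Real.log t - Real.log (b ^ 2)) := h1
          _ ≤ |Real.log (b ^ 2)| + 4 * ((K / b ^ 2) ^ ((1:ℝ)/4) * u ^ ((1:ℝ)/4)) := by
              rw [h2]
              have := h3.trans (by nlinarith : 4 * (t / b ^ 2) ^ ((1:ℝ)/4) ≤ 4 * ((K / b ^ 2) ^ ((1:ℝ)/4) * u ^ ((1:ℝ)/4)))
              linarith
    _ = |Real.log (b ^ 2)| / π * u⁻¹ + 4 * (K / b ^ 2) ^ ((1:ℝ)/4) / π * (u⁻¹ * u ^ ((1:ℝ)/4)) := by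
        rw [hpu]; ring
    _ = |Real.log (b ^ 2)| / π * u⁻¹ + 4 * (K / b ^ 2) ^ ((1:ℝ)/4) / π * u ^ (-(3/4 : ℝ)) := by
        rw [hrw]

lemma tendsto_inv_atBot_zero' : Tendsto (fun x : ℝ => x⁻¹) atBot (𝓝 0) := by
  have h := (tendsto_inv_atTop_zero (𝕜 := ℝ)).comp tendsto_neg_atBot_atTop
  have h2 := h.neg
  rw [neg_zero] at h2
  refine h2.congr fun x => ?_
  simp [Function.comp, inv_neg]

lemma tendsto_log_ratio (a b : ℝ) (hb : 0 < b) {l : Filter ℝ}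
    (hl : Tendsto (fun x : ℝ => x⁻¹) l (𝓝 0)) (hne : ∀ᶠ x in l, x ≠ 0) :
    Tendsto (fun x => Real.log (1 + x ^ 2) - Real.log ((x - a) ^ 2 + b ^ 2)) l (𝓝 0) := by
  have hq : ∀ x : ℝ, 0 < (x - a) ^ 2 + b ^ 2 := fun x => by positivity
  have hφ : Tendsto (fun t : ℝ => (t ^ 2 + 1) / ((1 - a * t) ^ 2 + (b * t) ^ 2)) (𝓝 0) (𝓝 1) := by
    have hc : ContinuousAt (fun t : ℝ => (t ^ 2 + 1) / ((1 - a * t) ^ 2 + (b * t) ^ 2)) 0 := by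
      apply ContinuousAt.div (by fun_prop) (by fun_prop)
      norm_num
    have : ((0:ℝ) ^ 2 + 1) / ((1 - a * 0) ^ 2 + (b * 0) ^ 2) = 1 := by norm_num
    simpa [this] using hc.tendsto
  have hlog : Tendsto (fun t : ℝ => Real.log ((t ^ 2 + 1) / ((1 - a * t) ^ 2 + (b * t) ^ 2)))
      (𝓝 0) (𝓝 0) := by
    have := ((Real.continuousAt_log one_ne_zero).tendsto.comp hφ)
    simpa [Function.comp_def] using this
  refine (hlog.comp hl).congr' (hne.mono fun x hx => ?_)
  have hx2 : (0:ℝ) < 1 + x ^ 2 := by positivity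
  simp only [Function.comp]
  have key : ((x⁻¹) ^ 2 + 1) / ((1 - a * x⁻¹) ^ 2 + (b * x⁻¹) ^ 2)
      = (1 + x ^ 2) / ((x - a) ^ 2 + b ^ 2) := by
    field_simp
  rw [key, Real.log_div hx2.ne' (hq x).ne']


lemma J_integrable (a b : ℝ) (hb : 0 < b) :
    Integrable (fun x : ℝ => (((1:ℝ) + x ^ 2) * ((x - a) ^ 2 + b ^ 2))⁻¹) := by
  have hcont : Continuous (fun x : ℝ => (((1:ℝ) + x ^ 2) * ((x - a) ^ 2 + b ^ 2))⁻¹) := by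
    refine Continuous.inv₀ (by continuity) fun x => by positivity
  refine (integrable_inv_one_add_sq.const_mul ((b ^ 2)⁻¹)).mono' hcont.aestronglyMeasurable
    (Eventually.of_forall fun x => ?_)
  have h1 : (0:ℝ) < 1 + x ^ 2 := by positivity
  have h2 : (0:ℝ) < (x - a) ^ 2 + b ^ 2 := by positivity
  rw [Real.norm_eq_abs, abs_of_nonneg (by positivity)]
  rw [mul_inv, mul_comm]
  apply mul_le_mul_of_nonneg_right _ (by positivity)
  apply inv_anti₀ (by positivity)
  nlinarith [sq_nonneg (x - a)]

set_option maxHeartbeats 1600000 in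
lemma J_eval (a b : ℝ) (hb : 0 < b) :
    ∫ x : ℝ, (((1:ℝ) + x ^ 2) * ((x - a) ^ 2 + b ^ 2))⁻¹
      = π * (1 + b) / (b * (a ^ 2 + (1 + b) ^ 2)) := by
  have hπ := Real.pi_pos
  have hq : ∀ x : ℝ, 0 < (x - a) ^ 2 + b ^ 2 := fun x => by positivity
  have hint := J_integrable a b hb
  have T1 : Tendsto (fun R : ℝ => ∫ x in (-R)..R, (((1:ℝ) + x ^ 2) * ((x - a) ^ 2 + b ^ 2))⁻¹)
      atTop (𝓝 (∫ x : ℝ, (((1:ℝ) + x ^ 2) * ((x - a) ^ 2 + b ^ 2))⁻¹)) :=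
    intervalIntegral_tendsto_integral hint tendsto_neg_atTop_atBot tendsto_id
  rcases eq_or_ne ((a ^ 2 + b ^ 2 - 1) ^ 2 + 4 * a ^ 2) 0 with hΔ | hΔ
  · -- degenerate case : a = 0, b = 1
    have ha2 : a ^ 2 = 0 := by nlinarith [sq_nonneg (a ^ 2 + b ^ 2 - 1), sq_nonneg a]
    have ha : a = 0 := by
      have := sq_nonneg a; nlinarith
    have hb1 : b = 1 := by nlinarith [sq_nonneg (b - 1), sq_nonneg (b + 1)]
    subst ha; subst hb1
    set G : ℝ → ℝ := fun x => x / (2 * (1 + x ^ 2)) + Real.arctan x / 2 with hGdef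
    have hG : ∀ x : ℝ, HasDerivAt G ((((1:ℝ) + x ^ 2) * ((x - 0) ^ 2 + 1 ^ 2))⁻¹) x := by
      intro x
      have h1 : (0:ℝ) < 1 + x ^ 2 := by positivity
      have hd1 : HasDerivAt (fun y : ℝ => 2 * (1 + y ^ 2)) (2 * (2 * x)) x := by
        simpa using (((hasDerivAt_pow 2 x).const_add 1).const_mul 2)
      have hd2 : HasDerivAt (fun y : ℝ => y / (2 * (1 + y ^ 2)))
          ((1 * (2 * (1 + x ^ 2)) - x * (2 * (2 * x))) / (2 * (1 + x ^ 2)) ^ 2) x :=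
        (hasDerivAt_id x).div hd1 (by positivity)
      have hd3 := (Real.hasDerivAt_arctan x).div_const 2
      have := hd2.add hd3
      refine this.congr_deriv ?_
      field_simp
      ring
    have hI : ∀ R : ℝ, ∫ x in (-R)..R, (((1:ℝ) + x ^ 2) * ((x - 0) ^ 2 + 1 ^ 2))⁻¹ = G R - G (-R) :=
      fun R => intervalIntegral.integral_eq_sub_of_hasDerivAt (fun x _ => hG x)
        hint.intervalIntegrable
    have hfrac : ∀ {l : Filter ℝ}, Tendsto (fun x : ℝ => x⁻¹) l (𝓝 0) → (∀ᶠ x in l, x ≠ 0) →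
        Tendsto (fun x : ℝ => x / (2 * (1 + x ^ 2))) l (𝓝 0) := by
      intro l hl hne
      have hφ : Tendsto (fun t : ℝ => t / (2 * (t ^ 2 + 1))) (𝓝 0) (𝓝 0) := by
        have hc : ContinuousAt (fun t : ℝ => t / (2 * (t ^ 2 + 1))) 0 :=
          ContinuousAt.div (by fun_prop) (by fun_prop) (by norm_num)
        simpa using hc.tendsto
      refine (hφ.comp hl).congr' (hne.mono fun x hx => ?_)
      simp only [Function.comp]
      field_simp
    have harcT : Tendsto (fun x : ℝ => Real.arctan x / 2) atTop (𝓝 (π / 2 / 2)) :=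
      ((Real.tendsto_arctan_atTop.mono_right nhdsWithin_le_nhds)).div_const 2
    have harcB : Tendsto (fun x : ℝ => Real.arctan x / 2) atBot (𝓝 (-(π / 2) / 2)) :=
      ((Real.tendsto_arctan_atBot.mono_right nhdsWithin_le_nhds)).div_const 2
    have GT : Tendsto G atTop (𝓝 (0 + π / 2 / 2)) :=
      (hfrac tendsto_inv_atTop_zero (eventually_ne_atTop 0)).add harcT
    have GB : Tendsto G atBot (𝓝 (0 + -(π / 2) / 2)) :=
      (hfrac tendsto_inv_atBot_zero' (eventually_ne_atBot 0)).add harcB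
    have T2 : Tendsto (fun R : ℝ => G R - G (-R)) atTop
        (𝓝 ((0 + π / 2 / 2) - (0 + -(π / 2) / 2))) :=
      GT.sub (GB.comp tendsto_neg_atTop_atBot)
    have T2' := T2.congr fun R => (hI R).symm
    have := tendsto_nhds_unique T1 T2'
    rw [this]
    ring
  · -- generic case
    set P : ℝ := a ^ 2 + b ^ 2 - 1 with hP
    set Δ : ℝ := P ^ 2 + 4 * a ^ 2 with hΔdef
    set A : ℝ := 2 * a / Δ with hA
    set Bc : ℝ := P / Δ with hBc
    set Dc : ℝ := (1 + 3 * a ^ 2 - b ^ 2) / Δ with hDc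
    set Kc : ℝ := (Dc - A * a) / b with hKc
    set G : ℝ → ℝ := fun x => A / 2 * Real.log (1 + x ^ 2)
      - A / 2 * Real.log ((x - a) ^ 2 + b ^ 2)
      + Bc * Real.arctan x + Kc * Real.arctan ((x - a) / b) with hGdef
    have hG : ∀ x : ℝ, HasDerivAt G ((((1:ℝ) + x ^ 2) * ((x - a) ^ 2 + b ^ 2))⁻¹) x := by
      intro x
      have h1 : (0:ℝ) < 1 + x ^ 2 := by positivity
      have h2 : (0:ℝ) < (x - a) ^ 2 + b ^ 2 := hq x
      have hd1 : HasDerivAt (fun y : ℝ => 1 + y ^ 2) (2 * x) x := by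
        simpa using ((hasDerivAt_pow 2 x).const_add 1)
      have hd2 : HasDerivAt (fun y : ℝ => (y - a) ^ 2 + b ^ 2) (2 * (x - a)) x := by
        simpa using (((hasDerivAt_id x).sub_const a).pow 2).add_const (b ^ 2)
      have hl1 := (hd1.log h1.ne').const_mul (A / 2)
      have hl2 := (hd2.log h2.ne').const_mul (A / 2)
      have ha1 := (Real.hasDerivAt_arctan x).const_mul Bc
      have hinner : HasDerivAt (fun y : ℝ => (y - a) / b) (1 / b) x := by
        simpa using ((hasDerivAt_id x).sub_const a).div_const b
      have ha2 := (hinner.arctan).const_mul Kc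
      have htot := ((hl1.sub hl2).add ha1).add ha2
      refine htot.congr_deriv ?_
      rw [show (1:ℝ) + ((x - a) / b) ^ 2 = ((x - a) ^ 2 + b ^ 2) / b ^ 2 by field_simp; ring]
      rw [one_div_div]
      rw [hΔdef, hP] at hΔ
      simp only [hKc, hDc, hA, hBc, hΔdef, hP]
      field_simp
      rw [div_eq_one_iff_eq (by convert hΔ using 2; ring)]
      ring
    have hI : ∀ R : ℝ, ∫ x in (-R)..R, (((1:ℝ) + x ^ 2) * ((x - a) ^ 2 + b ^ 2))⁻¹ = G R - G (-R) :=
      fun R => intervalIntegral.integral_eq_sub_of_hasDerivAt (fun x _ => hG x)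
        hint.intervalIntegrable
    have hlogpart : ∀ {l : Filter ℝ}, Tendsto (fun x : ℝ => x⁻¹) l (𝓝 0) → (∀ᶠ x in l, x ≠ 0) →
        Tendsto (fun x : ℝ => A / 2 * Real.log (1 + x ^ 2)
          - A / 2 * Real.log ((x - a) ^ 2 + b ^ 2)) l (𝓝 0) := by
      intro l hl hne
      have := (tendsto_log_ratio a b hb hl hne).const_mul (A / 2)
      rw [mul_zero] at this
      refine this.congr fun x => by ring
    have harcT : Tendsto (fun x : ℝ => Kc * Real.arctan ((x - a) / b)) atTop (𝓝 (Kc * (π / 2))) := by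
      have hin : Tendsto (fun x : ℝ => (x - a) / b) atTop atTop :=
        (tendsto_atTop_add_const_right atTop (-a) tendsto_id).atTop_div_const hb
      exact ((Real.tendsto_arctan_atTop.mono_right nhdsWithin_le_nhds).comp hin).const_mul Kc
    have harcB : Tendsto (fun x : ℝ => Kc * Real.arctan ((x - a) / b)) atBot
        (𝓝 (Kc * (-(π / 2)))) := by
      have hin : Tendsto (fun x : ℝ => (x - a) / b) atBot atBot :=
        (tendsto_atBot_add_const_right atBot (-a) tendsto_id).atBot_div_const hb
      exact ((Real.tendsto_arctan_atBot.mono_right nhdsWithin_le_nhds).comp hin).const_mul Kc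
    have hbT : Tendsto (fun x : ℝ => Bc * Real.arctan x) atTop (𝓝 (Bc * (π / 2))) :=
      (Real.tendsto_arctan_atTop.mono_right nhdsWithin_le_nhds).const_mul Bc
    have hbB : Tendsto (fun x : ℝ => Bc * Real.arctan x) atBot (𝓝 (Bc * (-(π / 2)))) :=
      (Real.tendsto_arctan_atBot.mono_right nhdsWithin_le_nhds).const_mul Bc
    have GT : Tendsto G atTop (𝓝 (0 + Bc * (π / 2) + Kc * (π / 2))) :=
      ((hlogpart tendsto_inv_atTop_zero (eventually_ne_atTop 0)).add hbT).add harcT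
    have GB : Tendsto G atBot (𝓝 (0 + Bc * (-(π / 2)) + Kc * (-(π / 2)))) :=
      ((hlogpart tendsto_inv_atBot_zero' (eventually_ne_atBot 0)).add hbB).add harcB
    have T2 : Tendsto (fun R : ℝ => G R - G (-R)) atTop
        (𝓝 ((0 + Bc * (π / 2) + Kc * (π / 2)) - (0 + Bc * (-(π / 2)) + Kc * (-(π / 2))))) :=
      GT.sub (GB.comp tendsto_neg_atTop_atBot)
    have T2' := T2.congr fun R => (hI R).symm
    have heq := tendsto_nhds_unique T1 T2'
    rw [heq]
    have hden : (0:ℝ) < a ^ 2 + (1 + b) ^ 2 := by positivity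
    rw [hΔdef, hP] at hΔ
    simp only [hKc, hDc, hA, hBc, hΔdef, hP]
    field_simp
    have hΔ' : (a ^ 2 + b ^ 2 - 1) ^ 2 + a ^ 2 * 4 ≠ 0 := by convert hΔ using 2; ring
    field_simp
    ring

lemma integrable_pc : Integrable (fun x : ℝ => (π * (1 + x ^ 2))⁻¹) := by
  refine (integrable_inv_one_add_sq.const_mul π⁻¹).congr (Eventually.of_forall fun x => ?_)
  simp [mul_inv]; ring

lemma tendsto_log_sub (c1 c2 : ℝ) (h1 : 0 ≤ c1) (h2 : 0 ≤ c2) :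
    Tendsto (fun s : ℝ => Real.log (c1 + s ^ 2) - Real.log (c2 + (1 + s) ^ 2)) atTop (𝓝 0) := by
  have hφ : Tendsto (fun t : ℝ => (c1 * t ^ 2 + 1) / (c2 * t ^ 2 + (t + 1) ^ 2)) (𝓝 0) (𝓝 1) := by
    have hc : ContinuousAt (fun t : ℝ => (c1 * t ^ 2 + 1) / (c2 * t ^ 2 + (t + 1) ^ 2)) 0 := by
      apply ContinuousAt.div (by fun_prop) (by fun_prop)
      norm_num
    have h0 : (c1 * (0:ℝ) ^ 2 + 1) / (c2 * (0:ℝ) ^ 2 + ((0:ℝ) + 1) ^ 2) = 1 := by norm_num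
    simpa [h0] using hc.tendsto
  have hlog : Tendsto (fun t : ℝ => Real.log ((c1 * t ^ 2 + 1) / (c2 * t ^ 2 + (t + 1) ^ 2)))
      (𝓝 0) (𝓝 0) := by
    simpa [Function.comp_def] using (Real.continuousAt_log one_ne_zero).tendsto.comp hφ
  refine (hlog.comp tendsto_inv_atTop_zero).congr' ?_
  filter_upwards [eventually_gt_atTop 0] with s hs
  have hs1 : (0:ℝ) < c1 + s ^ 2 := by positivity
  have hs2 : (0:ℝ) < c2 + (1 + s) ^ 2 := by nlinarith
  simp only [Function.comp]
  have key : (c1 * (s⁻¹) ^ 2 + 1) / (c2 * (s⁻¹) ^ 2 + (s⁻¹ + 1) ^ 2)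
      = (c1 + s ^ 2) / (c2 + (1 + s) ^ 2) := by
    rw [div_eq_div_iff (by positivity) (by nlinarith)]
    field_simp
  rw [key, Real.log_div hs1.ne' hs2.ne']

set_option maxHeartbeats 800000 in
lemma I_eval (a b : ℝ) (hb : 0 < b) :
    ∫ x : ℝ, (π * (1 + x ^ 2))⁻¹ * Real.log ((x - a) ^ 2 + b ^ 2)
      = Real.log (a ^ 2 + (1 + b) ^ 2) := by
  have hπ := Real.pi_pos
  set φ : ℝ → ℝ := fun s => ∫ x : ℝ, (π * (1 + x ^ 2))⁻¹ * Real.log ((x - a) ^ 2 + s ^ 2)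
    with hφdef
  have hφderiv : ∀ s : ℝ, 0 < s → HasDerivAt φ (2 * (1 + s) / (a ^ 2 + (1 + s) ^ 2)) s := by
    intro s hs
    have h_meas : ∀ᶠ t in 𝓝 s, AEStronglyMeasurable
        (fun x : ℝ => (π * (1 + x ^ 2))⁻¹ * Real.log ((x - a) ^ 2 + t ^ 2)) volume := by
      refine Eventually.of_forall fun t => (Measurable.aestronglyMeasurable (by measurability))
    have h_int := integrable_p_log a s hs
    have h'_meas : AEStronglyMeasurable
        (fun x : ℝ => (π * (1 + x ^ 2))⁻¹ * (2 * s / ((x - a) ^ 2 + s ^ 2))) volume :=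
      Measurable.aestronglyMeasurable (by measurability)
    have h_bound : ∀ᵐ x : ℝ, ∀ t ∈ Metric.ball s (s / 2),
        ‖(π * (1 + x ^ 2))⁻¹ * (2 * t / ((x - a) ^ 2 + t ^ 2))‖
          ≤ (π * (1 + x ^ 2))⁻¹ * (4 / s) := by
      refine Eventually.of_forall fun x => fun t ht => ?_
      rw [Metric.mem_ball, Real.dist_eq, abs_lt] at ht
      have ht2 : s / 2 < t := by linarith [ht.1]
      have ht0 : 0 < t := lt_trans (by positivity) ht2
      have hq : (0:ℝ) < (x - a) ^ 2 + t ^ 2 := by positivity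
      rw [Real.norm_eq_abs, abs_of_nonneg (by positivity)]
      apply mul_le_mul_of_nonneg_left _ (by positivity)
      rw [div_le_div_iff₀ hq (by positivity)]
      nlinarith [sq_nonneg (x - a), sq_nonneg (t - s)]
    have bound_int : Integrable (fun x : ℝ => (π * (1 + x ^ 2))⁻¹ * (4 / s)) :=
      integrable_pc.mul_const _
    have h_diff : ∀ᵐ x : ℝ, ∀ t ∈ Metric.ball s (s / 2),
        HasDerivAt (fun t : ℝ => (π * (1 + x ^ 2))⁻¹ * Real.log ((x - a) ^ 2 + t ^ 2))
          ((π * (1 + x ^ 2))⁻¹ * (2 * t / ((x - a) ^ 2 + t ^ 2))) t := by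
      refine Eventually.of_forall fun x => fun t ht => ?_
      rw [Metric.mem_ball, Real.dist_eq, abs_lt] at ht
      have ht2 : s / 2 < t := by linarith [ht.1]
      have ht0 : 0 < t := lt_trans (by positivity) ht2
      have hq : (0:ℝ) < (x - a) ^ 2 + t ^ 2 := by positivity
      have hd : HasDerivAt (fun t : ℝ => (x - a) ^ 2 + t ^ 2) (2 * t) t := by
        simpa using (hasDerivAt_pow 2 t).const_add ((x - a) ^ 2)
      exact (hd.log hq.ne').const_mul _
    have key := hasDerivAt_integral_of_dominated_loc_of_deriv_le (μ := volume)
        (F := fun (t : ℝ) (x : ℝ) => (π * (1 + x ^ 2))⁻¹ * Real.log ((x - a) ^ 2 + t ^ 2))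
        (F' := fun (t : ℝ) (x : ℝ) => (π * (1 + x ^ 2))⁻¹ * (2 * t / ((x - a) ^ 2 + t ^ 2)))
        (bound := fun x : ℝ => (π * (1 + x ^ 2))⁻¹ * (4 / s))
        (Metric.ball_mem_nhds s (by positivity : (0:ℝ) < s / 2)) h_meas h_int h'_meas h_bound bound_int h_diff
    have hval : (∫ x : ℝ, (π * (1 + x ^ 2))⁻¹ * (2 * s / ((x - a) ^ 2 + s ^ 2)))
        = 2 * (1 + s) / (a ^ 2 + (1 + s) ^ 2) := by
      have hptwise : ∀ x : ℝ, (π * (1 + x ^ 2))⁻¹ * (2 * s / ((x - a) ^ 2 + s ^ 2))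
          = (2 * s / π) * (((1:ℝ) + x ^ 2) * ((x - a) ^ 2 + s ^ 2))⁻¹ := by
        intro x
        have h1 : (0:ℝ) < 1 + x ^ 2 := by positivity
        have h2 : (0:ℝ) < (x - a) ^ 2 + s ^ 2 := by positivity
        field_simp
      simp_rw [hptwise]
      rw [integral_const_mul, J_eval a s hs]
      have hden : (0:ℝ) < a ^ 2 + (1 + s) ^ 2 := by positivity
      field_simp
    rw [← hval]
    exact key.2
  -- ψ is constant on (0,∞)
  set ψ : ℝ → ℝ := fun s => φ s - Real.log (a ^ 2 + (1 + s) ^ 2) with hψdef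
  have hψderiv : ∀ s ∈ Ioi (0:ℝ), HasDerivAt ψ 0 s := by
    intro s hs
    have hs : (0:ℝ) < s := hs
    have hden : (0:ℝ) < a ^ 2 + (1 + s) ^ 2 := by positivity
    have hd : HasDerivAt (fun s : ℝ => a ^ 2 + (1 + s) ^ 2) (2 * (1 + s)) s := by
      have := (((hasDerivAt_id s).const_add 1).pow 2).const_add (a ^ 2)
      simpa using this
    have hlog := hd.log hden.ne'
    have := (hφderiv s hs).sub hlog
    exact this.congr_deriv (sub_self _)
  have hconst : ∀ s ∈ Ioi (0:ℝ), ∀ t ∈ Ioi (0:ℝ), ψ s = ψ t := by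
    intro s hs t ht
    refine (convex_Ioi (0:ℝ)).is_const_of_fderivWithin_eq_zero (𝕜 := ℝ)
      (fun x hx => (hψderiv x hx).differentiableAt.differentiableWithinAt) ?_ hs ht
    intro x hx
    rw [fderivWithin_of_isOpen isOpen_Ioi hx, (hψderiv x hx).hasFDerivAt.fderiv]
    ext z
    simp
  -- ψ tends to 0 at infinity
  have hψeq : ∀ s : ℝ, 0 < s → ψ s
      = ∫ x : ℝ, (π * (1 + x ^ 2))⁻¹
          * (Real.log ((x - a) ^ 2 + s ^ 2) - Real.log (a ^ 2 + (1 + s) ^ 2)) := by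
    intro s hs
    have hint1 := integrable_p_log a s hs
    have hint2 : Integrable (fun x : ℝ => (π * (1 + x ^ 2))⁻¹ * Real.log (a ^ 2 + (1 + s) ^ 2)) :=
      integrable_pc.mul_const _
    have : (∫ x : ℝ, (π * (1 + x ^ 2))⁻¹
          * (Real.log ((x - a) ^ 2 + s ^ 2) - Real.log (a ^ 2 + (1 + s) ^ 2)))
        = (∫ x : ℝ, (π * (1 + x ^ 2))⁻¹ * Real.log ((x - a) ^ 2 + s ^ 2))
          - ∫ x : ℝ, (π * (1 + x ^ 2))⁻¹ * Real.log (a ^ 2 + (1 + s) ^ 2) := by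
      rw [← integral_sub hint1 hint2]
      congr 1
      ext x
      ring
    rw [this]
    have hone : (∫ x : ℝ, (π * (1 + x ^ 2))⁻¹) = 1 := by
      have : ∀ x : ℝ, (π * (1 + x ^ 2))⁻¹ = π⁻¹ * ((1:ℝ) + x ^ 2)⁻¹ := fun x => by rw [mul_inv]
      simp_rw [this]
      rw [integral_const_mul, integral_univ_inv_one_add_sq, inv_mul_cancel₀ hπ.ne']
    rw [integral_mul_const, hone, one_mul]
  have hψ0 : Tendsto ψ atTop (𝓝 0) := by
    have hdct : Tendsto (fun s : ℝ => ∫ x : ℝ, (π * (1 + x ^ 2))⁻¹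
        * (Real.log ((x - a) ^ 2 + s ^ 2) - Real.log (a ^ 2 + (1 + s) ^ 2))) atTop
        (𝓝 (∫ _x : ℝ, (0:ℝ))) := by
      refine tendsto_integral_filter_of_dominated_convergence
        (bound := fun x : ℝ => (π * (1 + x ^ 2))⁻¹ * Real.log ((x - a) ^ 2 + 1 ^ 2)
          + Real.log (a ^ 2 + 4) * (π * (1 + x ^ 2))⁻¹)
        (Eventually.of_forall fun s => Measurable.aestronglyMeasurable (by measurability))
        ?_ ?_ ?_
      · filter_upwards [eventually_ge_atTop (1:ℝ)] with s hs1
        refine Eventually.of_forall fun x => ?_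
        have hs0 : (0:ℝ) < s := lt_of_lt_of_le one_pos hs1
        have hq : (0:ℝ) < (x - a) ^ 2 + s ^ 2 := by positivity
        have hden : (0:ℝ) < a ^ 2 + (1 + s) ^ 2 := by positivity
        have hs2 : (0:ℝ) < s ^ 2 := by positivity
        have hup : Real.log ((x - a) ^ 2 + s ^ 2) - Real.log (a ^ 2 + (1 + s) ^ 2)
            ≤ Real.log (1 + (x - a) ^ 2) := by
          have h1 : Real.log ((x - a) ^ 2 + s ^ 2) ≤ Real.log (s ^ 2 * (1 + (x - a) ^ 2)) := by
            apply Real.log_le_log hq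
            have hs2' : (1:ℝ) ≤ s ^ 2 := by nlinarith
            nlinarith [sq_nonneg (x - a)]
          rw [Real.log_mul hs2.ne' (by positivity : (0:ℝ) < 1 + (x - a) ^ 2).ne'] at h1
          have h2 : Real.log (s ^ 2) ≤ Real.log (a ^ 2 + (1 + s) ^ 2) := by
            apply Real.log_le_log hs2
            nlinarith
          linarith
        have hlow : -Real.log (a ^ 2 + 4)
            ≤ Real.log ((x - a) ^ 2 + s ^ 2) - Real.log (a ^ 2 + (1 + s) ^ 2) := by
          have h3 : Real.log (a ^ 2 + (1 + s) ^ 2) ≤ Real.log ((a ^ 2 + 4) * s ^ 2) := by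
            apply Real.log_le_log hden
            have hs2' : (1:ℝ) ≤ s ^ 2 := by nlinarith
            nlinarith [mul_nonneg (sq_nonneg a) (by nlinarith : (0:ℝ) ≤ s ^ 2 - 1), sq_nonneg (s - 1)]
          rw [Real.log_mul (by positivity : (a ^ 2 + (4:ℝ)) ≠ 0) hs2.ne'] at h3
          have h4 : Real.log (s ^ 2) ≤ Real.log ((x - a) ^ 2 + s ^ 2) := by
            apply Real.log_le_log hs2
            nlinarith [sq_nonneg (x - a)]
          linarith
        have hb1 : (0:ℝ) ≤ Real.log (1 + (x - a) ^ 2) := Real.log_nonneg (by nlinarith [sq_nonneg (x - a)])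
        have hb2 : (0:ℝ) ≤ Real.log (a ^ 2 + 4) := Real.log_nonneg (by nlinarith [sq_nonneg a])
        rw [Real.norm_eq_abs, abs_mul, abs_of_nonneg (by positivity : (0:ℝ) ≤ (π * (1 + x ^ 2))⁻¹)]
        have habs : |Real.log ((x - a) ^ 2 + s ^ 2) - Real.log (a ^ 2 + (1 + s) ^ 2)|
            ≤ Real.log (1 + (x - a) ^ 2) + Real.log (a ^ 2 + 4) := by
          rw [abs_le]
          constructor <;> linarith
        calc (π * (1 + x ^ 2))⁻¹ * |Real.log ((x - a) ^ 2 + s ^ 2) - Real.log (a ^ 2 + (1 + s) ^ 2)|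
            ≤ (π * (1 + x ^ 2))⁻¹ * (Real.log (1 + (x - a) ^ 2) + Real.log (a ^ 2 + 4)) :=
              mul_le_mul_of_nonneg_left habs (by positivity)
          _ = (π * (1 + x ^ 2))⁻¹ * Real.log ((x - a) ^ 2 + 1 ^ 2)
              + Real.log (a ^ 2 + 4) * (π * (1 + x ^ 2))⁻¹ := by
              rw [show (x - a) ^ 2 + 1 ^ 2 = 1 + (x - a) ^ 2 by ring]
              ring
      · exact (integrable_p_log a 1 one_pos).add (integrable_pc.const_mul _)
      · refine Eventually.of_forall fun x => ?_
        have := (tendsto_log_sub ((x - a) ^ 2) (a ^ 2) (sq_nonneg _) (sq_nonneg _)).const_mul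
          ((π * (1 + x ^ 2))⁻¹)
        simpa using this
    rw [integral_zero] at hdct
    refine hdct.congr' ?_
    filter_upwards [eventually_gt_atTop (0:ℝ)] with s hs
    exact (hψeq s hs).symm
  -- conclude
  have hψb : ψ b = 0 := by
    have h1 : Tendsto ψ atTop (𝓝 (ψ b)) := by
      refine tendsto_const_nhds.congr' ?_
      filter_upwards [eventually_gt_atTop (0:ℝ)] with s hs
      exact hconst b hb s hs
    exact tendsto_nhds_unique h1 hψ0
  have : φ b - Real.log (a ^ 2 + (1 + b) ^ 2) = 0 := hψb
  have hφb : φ b = Real.log (a ^ 2 + (1 + b) ^ 2) := by linarith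
  exact hφb

lemma integral_pc : ∫ x : ℝ, (π * (1 + x ^ 2))⁻¹ = 1 := by
  have hπ := Real.pi_pos
  have h : ∀ x : ℝ, (π * (1 + x ^ 2))⁻¹ = π⁻¹ * ((1:ℝ) + x ^ 2)⁻¹ := fun x => by rw [mul_inv]
  simp_rw [h]
  rw [integral_const_mul, integral_univ_inv_one_add_sq, inv_mul_cancel₀ hπ.ne']

lemma integrable_pc1 : Integrable (fun x : ℝ => (π * (1 + (x - 1) ^ 2))⁻¹) :=
  integrable_pc.comp_sub_right 1

lemma integral_pc1 : ∫ x : ℝ, (π * (1 + (x - 1) ^ 2))⁻¹ = 1 := by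
  have h := integral_sub_right_eq_self (μ := volume) (fun y : ℝ => (π * (1 + y ^ 2))⁻¹) 1
  calc ∫ x : ℝ, (π * (1 + (x - 1) ^ 2))⁻¹
      = ∫ x : ℝ, (fun y : ℝ => (π * (1 + y ^ 2))⁻¹) (x - 1) := by norm_num
    _ = ∫ y : ℝ, (π * (1 + y ^ 2))⁻¹ := h
    _ = 1 := integral_pc

lemma integrable_p1_log (a b : ℝ) (hb : 0 < b) :
    Integrable (fun x : ℝ => (π * (1 + (x - 1) ^ 2))⁻¹ * Real.log ((x - a) ^ 2 + b ^ 2)) := by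
  have h := (integrable_p_log (a - 1) b hb).comp_sub_right (1:ℝ)
  refine h.congr (Eventually.of_forall fun x => ?_)
  simp only []
  rw [show x - 1 - (a - 1) = x - a from by ring]

lemma I1_eval (a b : ℝ) (hb : 0 < b) :
    ∫ x : ℝ, (π * (1 + (x - 1) ^ 2))⁻¹ * Real.log ((x - a) ^ 2 + b ^ 2)
      = Real.log ((a - 1) ^ 2 + (1 + b) ^ 2) := by
  calc ∫ x : ℝ, (π * (1 + (x - 1) ^ 2))⁻¹ * Real.log ((x - a) ^ 2 + b ^ 2)
      = ∫ x : ℝ, (fun y : ℝ => (π * (1 + y ^ 2))⁻¹ * Real.log ((y - (a - 1)) ^ 2 + b ^ 2))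
          (x - 1) := by
        congr 1
        funext x
        simp only []
        rw [show x - 1 - (a - 1) = x - a from by ring]
    _ = ∫ y : ℝ, (π * (1 + y ^ 2))⁻¹ * Real.log ((y - (a - 1)) ^ 2 + b ^ 2) :=
        integral_sub_right_eq_self (μ := volume)
          (fun y : ℝ => (π * (1 + y ^ 2))⁻¹ * Real.log ((y - (a - 1)) ^ 2 + b ^ 2)) (1:ℝ)
    _ = Real.log ((a - 1) ^ 2 + (1 + b) ^ 2) := I_eval (a - 1) b hb

set_option maxHeartbeats 1000000 in
lemma F_closed (θ : ℝ) (h0 : 0 < θ) (h1 : θ < 1) :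
    (∫ x : ℝ, ((1 - θ) * (1 / (π * (1 + x ^ 2))) + θ * (1 / (π * (1 + (x - 1) ^ 2)))) *
        Real.log ((1 - θ) * (1 / (π * (1 + x ^ 2))) + θ * (1 / (π * (1 + (x - 1) ^ 2)))))
      = (1 - θ) * Real.log (3 - θ + 2 * Real.sqrt (1 + θ - θ ^ 2))
        + θ * Real.log (2 + θ + 2 * Real.sqrt (1 + θ - θ ^ 2)) - Real.log (20 * π) := by
  have hπ := Real.pi_pos
  have hc : (0:ℝ) < 1 + θ - θ ^ 2 := by nlinarith
  set b : ℝ := Real.sqrt (1 + θ - θ ^ 2) with hbdef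
  have hbpos : 0 < b := Real.sqrt_pos.mpr hc
  have hb2 : b ^ 2 = 1 + θ - θ ^ 2 := Real.sq_sqrt hc.le
  have hsplit : (fun x : ℝ =>
      ((1 - θ) * (1 / (π * (1 + x ^ 2))) + θ * (1 / (π * (1 + (x - 1) ^ 2)))) *
        Real.log ((1 - θ) * (1 / (π * (1 + x ^ 2))) + θ * (1 / (π * (1 + (x - 1) ^ 2)))))
      = (fun x : ℝ =>
        ((1 - θ) * ((π * (1 + x ^ 2))⁻¹ * Real.log ((x - (1 - θ)) ^ 2 + b ^ 2))
          + θ * ((π * (1 + (x - 1) ^ 2))⁻¹ * Real.log ((x - (1 - θ)) ^ 2 + b ^ 2)))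
        - (((1 - θ) * ((π * (1 + x ^ 2))⁻¹ * Real.log (1 + x ^ 2))
            + θ * ((π * (1 + (x - 1) ^ 2))⁻¹ * Real.log (1 + x ^ 2)))
          + ((1 - θ) * ((π * (1 + x ^ 2))⁻¹ * Real.log (1 + (x - 1) ^ 2))
            + θ * ((π * (1 + (x - 1) ^ 2))⁻¹ * Real.log (1 + (x - 1) ^ 2)))
          + Real.log π * ((π * (1 + x ^ 2))⁻¹ * (1 - θ)
            + (π * (1 + (x - 1) ^ 2))⁻¹ * θ))) := by
    funext x
    have hd0 : (0:ℝ) < 1 + x ^ 2 := by positivity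
    have hd1 : (0:ℝ) < 1 + (x - 1) ^ 2 := by positivity
    have hN : (0:ℝ) < (x - (1 - θ)) ^ 2 + b ^ 2 := by positivity
    have hM : (1 - θ) * (1 / (π * (1 + x ^ 2))) + θ * (1 / (π * (1 + (x - 1) ^ 2)))
        = ((x - (1 - θ)) ^ 2 + b ^ 2) / (π * ((1 + x ^ 2) * (1 + (x - 1) ^ 2))) := by
      rw [hb2]
      field_simp
      ring
    have hlogM : Real.log ((1 - θ) * (1 / (π * (1 + x ^ 2))) + θ * (1 / (π * (1 + (x - 1) ^ 2))))
        = Real.log ((x - (1 - θ)) ^ 2 + b ^ 2) - Real.log π - Real.log (1 + x ^ 2)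
          - Real.log (1 + (x - 1) ^ 2) := by
      rw [hM, Real.log_div hN.ne' (by positivity),
        Real.log_mul hπ.ne' (by positivity), Real.log_mul hd0.ne' hd1.ne']
      ring
    rw [hlogM]
    ring
  rw [hsplit]
  have i1 := integrable_p_log (1 - θ) b hbpos
  have i2 := integrable_p1_log (1 - θ) b hbpos
  have i3 : Integrable (fun x : ℝ => (π * (1 + x ^ 2))⁻¹ * Real.log (1 + x ^ 2)) := by
    have hfun : (fun x : ℝ => (π * (1 + x ^ 2))⁻¹ * Real.log ((x - 0) ^ 2 + 1 ^ 2))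
        = fun x : ℝ => (π * (1 + x ^ 2))⁻¹ * Real.log (1 + x ^ 2) := by
      funext x
      rw [show (x - (0:ℝ)) ^ 2 + 1 ^ 2 = 1 + x ^ 2 from by ring]
    exact hfun ▸ integrable_p_log 0 1 one_pos
  have i4 : Integrable (fun x : ℝ => (π * (1 + (x - 1) ^ 2))⁻¹ * Real.log (1 + x ^ 2)) := by
    have hfun : (fun x : ℝ => (π * (1 + (x - 1) ^ 2))⁻¹ * Real.log ((x - 0) ^ 2 + 1 ^ 2))
        = fun x : ℝ => (π * (1 + (x - 1) ^ 2))⁻¹ * Real.log (1 + x ^ 2) := by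
      funext x
      rw [show (x - (0:ℝ)) ^ 2 + 1 ^ 2 = 1 + x ^ 2 from by ring]
    exact hfun ▸ integrable_p1_log 0 1 one_pos
  have i5 : Integrable (fun x : ℝ => (π * (1 + x ^ 2))⁻¹ * Real.log (1 + (x - 1) ^ 2)) := by
    have hfun : (fun x : ℝ => (π * (1 + x ^ 2))⁻¹ * Real.log ((x - 1) ^ 2 + 1 ^ 2))
        = fun x : ℝ => (π * (1 + x ^ 2))⁻¹ * Real.log (1 + (x - 1) ^ 2) := by
      funext x
      rw [show (x - (1:ℝ)) ^ 2 + 1 ^ 2 = 1 + (x - 1) ^ 2 from by ring]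
    exact hfun ▸ integrable_p_log 1 1 one_pos
  have i6 : Integrable (fun x : ℝ => (π * (1 + (x - 1) ^ 2))⁻¹ * Real.log (1 + (x - 1) ^ 2)) := by
    have hfun : (fun x : ℝ => (π * (1 + (x - 1) ^ 2))⁻¹ * Real.log ((x - 1) ^ 2 + 1 ^ 2))
        = fun x : ℝ => (π * (1 + (x - 1) ^ 2))⁻¹ * Real.log (1 + (x - 1) ^ 2) := by
      funext x
      rw [show (x - (1:ℝ)) ^ 2 + 1 ^ 2 = 1 + (x - 1) ^ 2 from by ring]
    exact hfun ▸ integrable_p1_log 1 1 one_pos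
  have e1 := I_eval (1 - θ) b hbpos
  have e2 := I1_eval (1 - θ) b hbpos
  have e3 : ∫ x : ℝ, (π * (1 + x ^ 2))⁻¹ * Real.log (1 + x ^ 2) = Real.log 4 := by
    have h2 : (∫ x : ℝ, (π * (1 + x ^ 2))⁻¹ * Real.log (1 + x ^ 2))
        = ∫ x : ℝ, (π * (1 + x ^ 2))⁻¹ * Real.log ((x - 0) ^ 2 + 1 ^ 2) := by
      congr 1
      funext x
      rw [show (x - (0:ℝ)) ^ 2 + 1 ^ 2 = 1 + x ^ 2 from by ring]
    rw [h2, I_eval 0 1 one_pos]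
    norm_num
  have e4 : ∫ x : ℝ, (π * (1 + (x - 1) ^ 2))⁻¹ * Real.log (1 + x ^ 2) = Real.log 5 := by
    have h2 : (∫ x : ℝ, (π * (1 + (x - 1) ^ 2))⁻¹ * Real.log (1 + x ^ 2))
        = ∫ x : ℝ, (π * (1 + (x - 1) ^ 2))⁻¹ * Real.log ((x - 0) ^ 2 + 1 ^ 2) := by
      congr 1
      funext x
      rw [show (x - (0:ℝ)) ^ 2 + 1 ^ 2 = 1 + x ^ 2 from by ring]
    rw [h2, I1_eval 0 1 one_pos]
    norm_num
  have e5 : ∫ x : ℝ, (π * (1 + x ^ 2))⁻¹ * Real.log (1 + (x - 1) ^ 2) = Real.log 5 := by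
    have h2 : (∫ x : ℝ, (π * (1 + x ^ 2))⁻¹ * Real.log (1 + (x - 1) ^ 2))
        = ∫ x : ℝ, (π * (1 + x ^ 2))⁻¹ * Real.log ((x - 1) ^ 2 + 1 ^ 2) := by
      congr 1
      funext x
      rw [show (x - (1:ℝ)) ^ 2 + 1 ^ 2 = 1 + (x - 1) ^ 2 from by ring]
    rw [h2, I_eval 1 1 one_pos]
    norm_num
  have e6 : ∫ x : ℝ, (π * (1 + (x - 1) ^ 2))⁻¹ * Real.log (1 + (x - 1) ^ 2) = Real.log 4 := by
    have h2 : (∫ x : ℝ, (π * (1 + (x - 1) ^ 2))⁻¹ * Real.log (1 + (x - 1) ^ 2))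
        = ∫ x : ℝ, (π * (1 + (x - 1) ^ 2))⁻¹ * Real.log ((x - 1) ^ 2 + 1 ^ 2) := by
      congr 1
      funext x
      rw [show (x - (1:ℝ)) ^ 2 + 1 ^ 2 = 1 + (x - 1) ^ 2 from by ring]
    rw [h2, I1_eval 1 1 one_pos]
    norm_num
  have hg34 : Integrable (fun x : ℝ => (1 - θ) * ((π * (1 + x ^ 2))⁻¹ * Real.log (1 + x ^ 2))
      + θ * ((π * (1 + (x - 1) ^ 2))⁻¹ * Real.log (1 + x ^ 2))) :=
    (i3.const_mul (1 - θ)).add (i4.const_mul θ)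
  have hg56 : Integrable (fun x : ℝ => (1 - θ) * ((π * (1 + x ^ 2))⁻¹ * Real.log (1 + (x - 1) ^ 2))
      + θ * ((π * (1 + (x - 1) ^ 2))⁻¹ * Real.log (1 + (x - 1) ^ 2))) :=
    (i5.const_mul (1 - θ)).add (i6.const_mul θ)
  have hg78 : Integrable (fun x : ℝ => Real.log π * ((π * (1 + x ^ 2))⁻¹ * (1 - θ)
      + (π * (1 + (x - 1) ^ 2))⁻¹ * θ)) :=
    ((integrable_pc.mul_const (1 - θ)).add (integrable_pc1.mul_const θ)).const_mul (Real.log π)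
  have hA : Integrable (fun x : ℝ =>
      (1 - θ) * ((π * (1 + x ^ 2))⁻¹ * Real.log ((x - (1 - θ)) ^ 2 + b ^ 2))
      + θ * ((π * (1 + (x - 1) ^ 2))⁻¹ * Real.log ((x - (1 - θ)) ^ 2 + b ^ 2))) :=
    (i1.const_mul (1 - θ)).add (i2.const_mul θ)
  have hB : Integrable (fun x : ℝ =>
      ((1 - θ) * ((π * (1 + x ^ 2))⁻¹ * Real.log (1 + x ^ 2))
        + θ * ((π * (1 + (x - 1) ^ 2))⁻¹ * Real.log (1 + x ^ 2)))
      + ((1 - θ) * ((π * (1 + x ^ 2))⁻¹ * Real.log (1 + (x - 1) ^ 2))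
        + θ * ((π * (1 + (x - 1) ^ 2))⁻¹ * Real.log (1 + (x - 1) ^ 2)))
      + Real.log π * ((π * (1 + x ^ 2))⁻¹ * (1 - θ)
        + (π * (1 + (x - 1) ^ 2))⁻¹ * θ)) :=
    (hg34.add hg56).add hg78
  have hg3456 : Integrable (fun x : ℝ =>
      ((1 - θ) * ((π * (1 + x ^ 2))⁻¹ * Real.log (1 + x ^ 2))
        + θ * ((π * (1 + (x - 1) ^ 2))⁻¹ * Real.log (1 + x ^ 2)))
      + ((1 - θ) * ((π * (1 + x ^ 2))⁻¹ * Real.log (1 + (x - 1) ^ 2))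
        + θ * ((π * (1 + (x - 1) ^ 2))⁻¹ * Real.log (1 + (x - 1) ^ 2)))) := hg34.add hg56
  rw [integral_sub hA hB]
  rw [integral_add (i1.const_mul (1 - θ)) (i2.const_mul θ)]
  rw [integral_add hg3456 hg78]
  rw [integral_add hg34 hg56]
  rw [integral_add (i3.const_mul (1 - θ)) (i4.const_mul θ)]
  rw [integral_add (i5.const_mul (1 - θ)) (i6.const_mul θ)]
  rw [integral_const_mul (Real.log π)]
  rw [integral_add (integrable_pc.mul_const (1 - θ)) (integrable_pc1.mul_const θ)]
  simp only [integral_const_mul, integral_mul_const]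
  rw [e1, e2, e3, e4, e5, e6, integral_pc, integral_pc1]
  rw [show (1 - θ) ^ 2 + (1 + b) ^ 2 = 3 - θ + 2 * b from by linear_combination hb2,
    show (1 - θ - 1) ^ 2 + (1 + b) ^ 2 = 2 + θ + 2 * b from by linear_combination hb2,
    show Real.log (20 * π) = Real.log 4 + Real.log 5 + Real.log π from by
      rw [show (20:ℝ) * π = 4 * (5 * π) from by ring,
        Real.log_mul (by norm_num) (by positivity), Real.log_mul (by norm_num) hπ.ne']
      ring]
  ring

/-- The negentropy `F(θ)` of the mixture of `p_{0,1}` and `p_{1,1}` is differentiable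
on `(0,1)` with derivative `F'(θ) = log((2√(1+θ−θ²)+θ+2)/(2√(1+θ−θ²)−θ+3))`. -/
theorem negentropy_hasDerivAt (F : ℝ → ℝ)
    (hF : F = fun θ : ℝ =>
      ∫ x : ℝ, ((1 - θ) * (1 / (π * (1 + x ^ 2))) + θ * (1 / (π * (1 + (x - 1) ^ 2)))) *
        Real.log ((1 - θ) * (1 / (π * (1 + x ^ 2))) +
          θ * (1 / (π * (1 + (x - 1) ^ 2)))))
    (θ : ℝ) (hθ : θ ∈ Set.Ioo (0 : ℝ) 1) :
    HasDerivAt F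
      (Real.log ((2 * Real.sqrt (1 + θ - θ ^ 2) + θ + 2) /
        (2 * Real.sqrt (1 + θ - θ ^ 2) - θ + 3))) θ := by
  obtain ⟨h0, h1⟩ := hθ
  subst hF
  have hπ := Real.pi_pos
  have hc : (0:ℝ) < 1 + θ - θ ^ 2 := by nlinarith
  have hbpos : 0 < Real.sqrt (1 + θ - θ ^ 2) := Real.sqrt_pos.mpr hc
  obtain ⟨b, hbdef⟩ : ∃ b : ℝ, Real.sqrt (1 + θ - θ ^ 2) = b := ⟨_, rfl⟩
  rw [hbdef] at hbpos
  have hb2 : b ^ 2 = 1 + θ - θ ^ 2 := by rw [← hbdef]; exact Real.sq_sqrt hc.le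
  have hU : (0:ℝ) < 3 - θ + 2 * b := by nlinarith
  have hV : (0:ℝ) < 2 + θ + 2 * b := by nlinarith
  have hEq : (fun t : ℝ =>
      ∫ x : ℝ, ((1 - t) * (1 / (π * (1 + x ^ 2))) + t * (1 / (π * (1 + (x - 1) ^ 2)))) *
        Real.log ((1 - t) * (1 / (π * (1 + x ^ 2))) + t * (1 / (π * (1 + (x - 1) ^ 2)))))
      =ᶠ[𝓝 θ] (fun t : ℝ => (1 - t) * Real.log (3 - t + 2 * Real.sqrt (1 + t - t ^ 2))
        + t * Real.log (2 + t + 2 * Real.sqrt (1 + t - t ^ 2)) - Real.log (20 * π)) :=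
    Filter.eventuallyEq_of_mem (Ioo_mem_nhds h0 h1) fun t ht => F_closed t ht.1 ht.2
  rw [hbdef, hEq.hasDerivAt_iff]
  have hinner : HasDerivAt (fun t : ℝ => 1 + t - t ^ 2) (1 - 2 * θ) θ := by
    have := ((hasDerivAt_id θ).const_add 1).sub (hasDerivAt_pow 2 θ)
    exact this.congr_deriv (by norm_num)
  have hsq : HasDerivAt (fun t : ℝ => Real.sqrt (1 + t - t ^ 2)) ((1 - 2 * θ) / (2 * b)) θ := by
    have := hinner.sqrt hc.ne'
    rw [hbdef] at this
    exact this
  have hUd : HasDerivAt (fun t : ℝ => 3 - t + 2 * Real.sqrt (1 + t - t ^ 2))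
      (-1 + 2 * ((1 - 2 * θ) / (2 * b))) θ := by
    have h3 : HasDerivAt (fun t : ℝ => 3 - t) (-1) θ := by
      simpa using (hasDerivAt_id θ).const_sub 3
    exact h3.add (hsq.const_mul 2)
  have hVd : HasDerivAt (fun t : ℝ => 2 + t + 2 * Real.sqrt (1 + t - t ^ 2))
      (1 + 2 * ((1 - 2 * θ) / (2 * b))) θ := by
    have h3 : HasDerivAt (fun t : ℝ => 2 + t) 1 θ := by
      simpa using (hasDerivAt_id θ).const_add 2
    exact h3.add (hsq.const_mul 2)
  have hUne : (3 : ℝ) - θ + 2 * Real.sqrt (1 + θ - θ ^ 2) ≠ 0 := by rw [hbdef]; exact hU.ne'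
  have hVne : (2 : ℝ) + θ + 2 * Real.sqrt (1 + θ - θ ^ 2) ≠ 0 := by rw [hbdef]; exact hV.ne'
  have hlogU := hUd.log hUne
  have hlogV := hVd.log hVne
  rw [hbdef] at hlogU hlogV
  have hw1 : HasDerivAt (fun t : ℝ => 1 - t) (-1) θ := by
    simpa using (hasDerivAt_id θ).const_sub 1
  have hprod1 := hw1.mul hlogU
  have hprod2 := (hasDerivAt_id θ).mul hlogV
  have htot := (hprod1.add hprod2).sub_const (Real.log (20 * π))
  refine htot.congr_deriv ?_
  rw [hbdef]
  have hzero : (1 - θ) * ((-1 + 2 * ((1 - 2 * θ) / (2 * b))) / (3 - θ + 2 * b))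
      + θ * ((1 + 2 * ((1 - 2 * θ) / (2 * b))) / (2 + θ + 2 * b)) = 0 := by
    field_simp
    linear_combination (4 * θ - 2) * hb2
  rw [show 2 * b + θ + 2 = 2 + θ + 2 * b from by ring,
    show 2 * b - θ + 3 = 3 - θ + 2 * b from by ring,
    Real.log_div hV.ne' hU.ne']
  simp only [id_eq]
  linarith [hzero]
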